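/- Let R be a commutative ring and f: R → S a ring homomorphism. Then f is a ring epimorphism if and only if for every prime ideal p of R, the induced map R_p → S ⊗_R R_p is a ring epimorphism. -/

import Mathlib

open CategoryTheory TensorProduct

universe u

/-- `f : R → S` is an epimorphism in the category of rings. -/
def IsRingEpi {R S : Type u} [Ring R] [Ring S] (f : R →+* S) : Prop :=
  ∀ (T : Type u) [Ring T], ∀ g₁ g₂ : S →+* T, g₁.comp f = g₂.comp f → g₁ = g₂

/-- `Tor_i^R(M, N) = 0`. -/
def TorIsZero (R : Type u) [CommRing R] (i : ℕ)
    (M N : Type u) [AddCommGroup M] [Module R M] [AddCommGroup N] [Module R N] : Prop :=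
  Limits.IsZero (((Tor (ModuleCat.{u} R) i).obj (ModuleCat.of R M)).obj (ModuleCat.of R N))

/-- `R` has weak global dimension at most one: `Tor_2^R` vanishes identically. -/
def WeakGlobalDimLE1 (R : Type u) [CommRing R] : Prop :=
  ∀ M N : ModuleCat.{u} R, Limits.IsZero (((Tor (ModuleCat.{u} R) 2).obj M).obj N)

/-- A homological ring epimorphism: a ring epimorphism with `Tor_i^R(S,S) = 0` for `i ≥ 1`. -/
def IsHomologicalEpi (R S : Type u) [CommRing R] [CommRing S] [Algebra R S] : Prop :=
  IsRingEpi (algebraMap R S) ∧ ∀ i : ℕ, 1 ≤ i → TorIsZero R i S S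

/-- The tensor-square criterion for being a ring epimorphism. -/
lemma isRingEpi_iff_tmul {R S : Type u} [CommRing R] [CommRing S] [Algebra R S] :
    IsRingEpi (algebraMap R S) ↔ ∀ s : S, s ⊗ₜ[R] (1 : S) = (1 : S) ⊗ₜ[R] s := by
  constructor
  · intro H
    have := H (S ⊗[R] S) (Algebra.TensorProduct.includeLeftRingHom)
      ((Algebra.TensorProduct.includeRight : S →ₐ[R] S ⊗[R] S).toRingHom)
      (by
        ext r
        show algebraMap R S r ⊗ₜ[R] (1 : S) = (1 : S) ⊗ₜ[R] algebraMap R S r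
        simp only [Algebra.algebraMap_eq_smul_one, smul_tmul])
    exact fun s => RingHom.congr_fun this s
  · intro H T _ g₁ g₂ e
    letI : Module R T := Module.compHom T (g₁.comp (algebraMap R S))
    have hsmul : ∀ (r : R) (t : T), r • t = g₁ (algebraMap R S r) * t := fun _ _ => rfl
    let B : S →ₗ[R] S →ₗ[R] T := LinearMap.mk₂ R (fun s₁ s₂ => g₁ s₁ * g₂ s₂)
      (fun m₁ m₂ n => by
        show g₁ (m₁ + m₂) * g₂ n = g₁ m₁ * g₂ n + g₁ m₂ * g₂ n
        rw [map_add, add_mul])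
      (fun c m n => by
        show g₁ (c • m) * g₂ n = g₁ (algebraMap R S c) * (g₁ m * g₂ n)
        rw [Algebra.smul_def, map_mul, mul_assoc])
      (fun m n₁ n₂ => by
        show g₁ m * g₂ (n₁ + n₂) = g₁ m * g₂ n₁ + g₁ m * g₂ n₂
        rw [map_add, mul_add])
      (fun c m n => by
        show g₁ m * g₂ (c • n) = g₁ (algebraMap R S c) * (g₁ m * g₂ n)
        rw [Algebra.smul_def, map_mul, ← mul_assoc, ← mul_assoc]
        congr 1
        have hg : g₂ (algebraMap R S c) = g₁ (algebraMap R S c) := (RingHom.congr_fun e c).symm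
        rw [hg, ← map_mul, ← map_mul, mul_comm])
    let φ : S ⊗[R] S →ₗ[R] T := TensorProduct.lift B
    refine RingHom.ext fun s => ?_
    have := congrArg φ (H s)
    simpa [φ, B] using this

set_option maxHeartbeats 1000000 in
set_option synthInstance.maxHeartbeats 200000 in
theorem stmt2 (R S : Type u) [CommRing R] [CommRing S] [Algebra R S] :
    IsRingEpi (algebraMap R S) ↔
      ∀ (p : Ideal R) [p.IsPrime],
        IsRingEpi (algebraMap (Localization.AtPrime p) (Localization.AtPrime p ⊗[R] S)) := by
  constructor
  · intro H p hp
    rw [isRingEpi_iff_tmul]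
    set Rp := Localization.AtPrime p with hRp
    let F : (Rp ⊗[R] S) →ₐ[Rp] (Rp ⊗[R] S) ⊗[Rp] (Rp ⊗[R] S) :=
      Algebra.TensorProduct.includeLeft
    let G : (Rp ⊗[R] S) →ₐ[Rp] (Rp ⊗[R] S) ⊗[Rp] (Rp ⊗[R] S) :=
      Algebra.TensorProduct.includeRight
    have compat :
        (F.toRingHom.comp (Algebra.TensorProduct.includeRight :
          S →ₐ[R] Rp ⊗[R] S).toRingHom).comp (algebraMap R S) =
        (G.toRingHom.comp (Algebra.TensorProduct.includeRight :
          S →ₐ[R] Rp ⊗[R] S).toRingHom).comp (algebraMap R S) := by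
      ext r
      have h1 : (1 : Rp) ⊗ₜ[R] (algebraMap R S r) =
          (algebraMap R Rp r) ⊗ₜ[R] (1 : S) := by
        rw [Algebra.algebraMap_eq_smul_one (A := S), Algebra.algebraMap_eq_smul_one (A := Rp),
          ← smul_tmul]
      have h2 : (algebraMap R Rp r) ⊗ₜ[R] (1 : S) =
          algebraMap Rp (Rp ⊗[R] S) (algebraMap R Rp r) := rfl
      show F ((1 : Rp) ⊗ₜ[R] (algebraMap R S r)) = G ((1 : Rp) ⊗ₜ[R] (algebraMap R S r))
      rw [h1, h2, F.commutes, G.commutes]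
    have key : ∀ s : S, F ((1 : Rp) ⊗ₜ[R] s) = G ((1 : Rp) ⊗ₜ[R] s) := fun s =>
      RingHom.congr_fun (H ((Rp ⊗[R] S) ⊗[Rp] (Rp ⊗[R] S)) _ _ compat) s
    intro t
    have : F t = G t := by
      induction t with
      | zero => rw [map_zero, map_zero]
      | tmul r s =>
        have h : r ⊗ₜ[R] s = (algebraMap Rp (Rp ⊗[R] S) r) * ((1 : Rp) ⊗ₜ[R] s) := by
          rw [show (algebraMap Rp (Rp ⊗[R] S) r) = r ⊗ₜ[R] (1 : S) from rfl,
            Algebra.TensorProduct.tmul_mul_tmul, mul_one, one_mul]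
        rw [h, map_mul, map_mul, key, F.commutes, G.commutes]
      | add x y hx hy => rw [map_add, map_add, hx, hy]
    exact this
  · intro H
    rw [isRingEpi_iff_tmul]
    intro s
    haveI inst : ∀ (P : Ideal R) [P.IsMaximal], IsLocalizedModule P.primeCompl
        (TensorProduct.mk R (Localization.AtPrime P) (S ⊗[R] S) 1) := fun P _ =>
      (isLocalizedModule_iff_isBaseChange P.primeCompl _ _).mpr
        (TensorProduct.isBaseChange R (S ⊗[R] S) (Localization.AtPrime P))
    refine @Module.eq_of_localization_maximal R (S ⊗[R] S) _ _ _
      (fun P _ => Localization.AtPrime P ⊗[R] (S ⊗[R] S)) _ _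
      (fun P _ => TensorProduct.mk R (Localization.AtPrime P) (S ⊗[R] S) 1) inst
      _ _ (fun P hP => ?_)
    set Rp := Localization.AtPrime P with hRp
    have hp := H P
    rw [isRingEpi_iff_tmul] at hp
    have heq := hp ((1 : Rp) ⊗ₜ[R] s)
    let a : (Rp ⊗[R] S) →ₐ[Rp] Rp ⊗[R] (S ⊗[R] S) :=
      Algebra.TensorProduct.map (AlgHom.id Rp Rp)
        (Algebra.TensorProduct.includeLeft : S →ₐ[R] S ⊗[R] S)
    let b : (Rp ⊗[R] S) →ₐ[Rp] Rp ⊗[R] (S ⊗[R] S) :=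
      Algebra.TensorProduct.map (AlgHom.id Rp Rp)
        (Algebra.TensorProduct.includeRight : S →ₐ[R] S ⊗[R] S)
    let χ : (Rp ⊗[R] S) ⊗[Rp] (Rp ⊗[R] S) →ₐ[Rp] Rp ⊗[R] (S ⊗[R] S) :=
      Algebra.TensorProduct.lift a b (fun x y => mul_comm _ _)
    have e1 : χ.comp Algebra.TensorProduct.includeLeft = a :=
      Algebra.TensorProduct.lift_comp_includeLeft a b (fun x y => mul_comm _ _)
    have e2 : χ.comp Algebra.TensorProduct.includeRight = b :=
      Algebra.TensorProduct.lift_comp_includeRight a b (fun x y => mul_comm _ _)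
    have heq' : (Algebra.TensorProduct.includeLeft : (Rp ⊗[R] S) →ₐ[Rp] _) ((1 : Rp) ⊗ₜ[R] s) =
        (Algebra.TensorProduct.includeRight : (Rp ⊗[R] S) →ₐ[Rp] (Rp ⊗[R] S) ⊗[Rp] (Rp ⊗[R] S))
          ((1 : Rp) ⊗ₜ[R] s) := heq
    have := congrArg χ heq'
    rw [← AlgHom.comp_apply, ← AlgHom.comp_apply, e1, e2] at this
    simpa [a, b] using this
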